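/- Fix ε > 0, a_ε = (√(1+4ε) − 1)/2, μ_ε(s) = max{s(1−s)+ε, ε}, and let f_ε be the regularized potential. Then f_ε(s) ≥ ((1 + 2a_ε)/(2ε))·(s − 1)² + f_ε(1) for every s ≥ 1, and f_ε(s) ≥ ((1 + 2a_ε)/(2ε))·s² + f_ε(0) for every s ≤ 0. -/

import Mathlib

/-- quadratic lower bounds for `f_ε` outside `[0,1]`. -/
theorem regularized_potential_outer_bounds (ε : ℝ) (hε : 0 < ε)
    (aε : ℝ) (haε : aε = (Real.sqrt (1 + 4 * ε) - 1) / 2)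
    (με : ℝ → ℝ) (hμε : ∀ s : ℝ, με s = max (s * (1 - s) + ε) ε)
    (fε : ℝ → ℝ) (hreg : ContDiff ℝ 2 fε)
    (hf'' : ∀ s : ℝ, deriv (deriv fε) s = (1 + 2 * aε) / με s)
    (hf' : deriv fε (1/2) = 0) (hf : fε (1/2) = - Real.log 2) :
    (∀ s : ℝ, 1 ≤ s → (1 + 2 * aε) / (2 * ε) * (s - 1) ^ 2 + fε 1 ≤ fε s) ∧
    (∀ s : ℝ, s ≤ 0 → (1 + 2 * aε) / (2 * ε) * s ^ 2 + fε 0 ≤ fε s) := by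
  have h2a : 1 + 2 * aε = Real.sqrt (1 + 4 * ε) := by rw [haε]; ring
  have hpos : 0 < 1 + 2 * aε := by
    rw [h2a]; exact Real.sqrt_pos.mpr (by linarith)
  have hμpos : ∀ s, 0 < με s :=
    fun s => lt_of_lt_of_le hε (by rw [hμε s]; exact le_max_right _ _)
  have hreg' : ContDiff ℝ (1 + 1) fε := by
    have : ((1 : WithTop ℕ∞) + 1) = 2 := by norm_num
    rw [this]; exact hreg
  have hdiff : Differentiable ℝ fε := hreg.differentiable (by norm_num)
  have hdiff' : Differentiable ℝ (deriv fε) :=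
    (contDiff_succ_iff_deriv.mp hreg').2.2.differentiable (by norm_num)
  have hmono : Monotone (deriv fε) := by
    apply monotone_of_deriv_nonneg hdiff'
    intro s
    rw [hf'' s]
    exact div_nonneg hpos.le (hμpos s).le
  set c : ℝ := (1 + 2 * aε) / ε with hc
  constructor
  · -- right branch
    have hf'1 : 0 ≤ deriv fε 1 := by
      have h := hmono (by norm_num : (1:ℝ)/2 ≤ 1)
      rwa [hf'] at h
    have hμeq : ∀ x : ℝ, 1 ≤ x → με x = ε := by
      intro x hx
      rw [hμε x]
      apply max_eq_right
      nlinarith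
    have hslope : ∀ x : ℝ, 1 ≤ x → c * (x - 1) ≤ deriv fε x := by
      have hm : MonotoneOn (fun x => deriv fε x - c * (x - 1)) (Set.Ici 1) := by
        apply monotoneOn_of_deriv_nonneg (convex_Ici 1)
        · exact (hdiff'.continuous.sub (continuous_const.mul (continuous_id.sub continuous_const))).continuousOn
        · exact (hdiff'.sub ((differentiable_id.sub_const 1).const_mul c)).differentiableOn
        · intro x hx
          rw [interior_Ici] at hx
          have hder : HasDerivAt (fun x => deriv fε x - c * (x - 1))
              (deriv (deriv fε) x - c * 1) x :=
            ((hdiff' x).hasDerivAt).sub (((hasDerivAt_id x).sub_const 1).const_mul c)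
          rw [hder.deriv, hf'' x, hμeq x hx.le, hc]
          simp
      intro x hx
      have h := hm Set.self_mem_Ici (Set.mem_Ici.mpr hx) hx
      simp only [sub_self, mul_zero, sub_zero] at h
      linarith
    intro s hs
    have hm : MonotoneOn (fun x => fε x - c / 2 * (x - 1) ^ 2) (Set.Ici 1) := by
      apply monotoneOn_of_deriv_nonneg (convex_Ici 1)
      · exact (hdiff.continuous.sub (continuous_const.mul ((continuous_id.sub continuous_const).pow 2))).continuousOn
      · exact (hdiff.sub (((differentiable_id.sub_const 1).pow 2).const_mul (c/2))).differentiableOn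
      · intro x hx
        rw [interior_Ici] at hx
        have hder : HasDerivAt (fun x => fε x - c / 2 * (x - 1) ^ 2)
            (deriv fε x - c / 2 * (2 * (x - 1) ^ 1 * 1)) x :=
          ((hdiff x).hasDerivAt).sub ((((hasDerivAt_id x).sub_const 1).pow 2).const_mul (c/2))
        rw [hder.deriv]
        have := hslope x hx.le
        nlinarith [this]
    have h := hm Set.self_mem_Ici (Set.mem_Ici.mpr hs) hs
    simp only [sub_self, zero_pow, mul_zero, sub_zero] at h
    have hceq : (1 + 2 * aε) / (2 * ε) = c / 2 := by rw [hc]; ring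
    rw [hceq]
    norm_num at h
    linarith
  · -- left branch
    have hf'0 : deriv fε 0 ≤ 0 := by
      have h := hmono (by norm_num : (0:ℝ) ≤ 1/2)
      rwa [hf'] at h
    have hμeq : ∀ x : ℝ, x ≤ 0 → με x = ε := by
      intro x hx
      rw [hμε x]
      apply max_eq_right
      nlinarith
    have hslope : ∀ x : ℝ, x ≤ 0 → deriv fε x ≤ c * x := by
      have hm : MonotoneOn (fun x => deriv fε x - c * x) (Set.Iic 0) := by
        apply monotoneOn_of_deriv_nonneg (convex_Iic 0)
        · exact (hdiff'.continuous.sub (continuous_const.mul continuous_id)).continuousOn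
        · exact (hdiff'.sub (differentiable_id.const_mul c)).differentiableOn
        · intro x hx
          rw [interior_Iic] at hx
          have hder : HasDerivAt (fun x => deriv fε x - c * x)
              (deriv (deriv fε) x - c * 1) x :=
            ((hdiff' x).hasDerivAt).sub ((hasDerivAt_id x).const_mul c)
          rw [hder.deriv, hf'' x, hμeq x hx.le, hc]
          simp
      intro x hx
      have h := hm (Set.mem_Iic.mpr hx) Set.self_mem_Iic hx
      simp only [mul_zero, sub_zero] at h
      linarith
    intro s hs
    have hm : AntitoneOn (fun x => fε x - c / 2 * x ^ 2) (Set.Iic 0) := by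
      apply antitoneOn_of_deriv_nonpos (convex_Iic 0)
      · exact (hdiff.continuous.sub (continuous_const.mul (continuous_id.pow 2))).continuousOn
      · exact (hdiff.sub ((differentiable_id.pow 2).const_mul (c/2))).differentiableOn
      · intro x hx
        rw [interior_Iic] at hx
        have hder : HasDerivAt (fun x => fε x - c / 2 * x ^ 2)
            (deriv fε x - c / 2 * (2 * x ^ 1 * 1)) x :=
          ((hdiff x).hasDerivAt).sub (((hasDerivAt_id x).pow 2).const_mul (c/2))
        rw [hder.deriv]
        have := hslope x hx.le
        nlinarith [this]
    have h := hm (Set.mem_Iic.mpr hs) Set.self_mem_Iic hs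
    norm_num at h
    have hceq : (1 + 2 * aε) / (2 * ε) = c / 2 := by rw [hc]; ring
    rw [hceq]
    linarith
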